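/- arXiv:1403.4803 — 2 statements merged into one kernel-verified Lean document; each statement's English description precedes it below -/
import Mathlib

section
/- For every t ∈ ℤ and every integer k ≥ 1, the Hessenbergian ξ_{t,k} satisfies the backward recursion ξ_{t,k} = Σ_{m=1}^{min(p,k)} φ_m(t) ξ_{t−m, k−m}. -/
open Finset

/-- The `k × k` solution matrix `Φ_{t,k}`: its (1-based) `(i,j)` entry is `-1` if `i = j-1`,
`φ_{1+i−j}(t−k+i)` if `0 ≤ i−j ≤ p−1`, and `0` otherwise. -/
noncomputable def PhiMat (p : ℕ) (φ : ℕ → ℤ → ℝ) (t : ℤ) (k : ℕ) :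
    Matrix (Fin k) (Fin k) ℝ :=
  fun i j =>
    if (i : ℕ) + 1 = (j : ℕ) then -1
    else if (j : ℕ) ≤ (i : ℕ) ∧ (i : ℕ) - (j : ℕ) + 1 ≤ p then
      φ ((i : ℕ) - (j : ℕ) + 1) (t - (k : ℤ) + (i : ℕ) + 1)
    else 0


open Matrix in
lemma minor_det (p : ℕ) (φ : ℕ → ℤ → ℝ) (t : ℤ) (n : ℕ) (j : Fin (n+1)) :
    ((PhiMat p φ t (n+1)).submatrix (Fin.last n).succAbove j.succAbove).det
      = (-1 : ℝ) ^ (n - (j : ℕ)) * (PhiMat p φ (t - ((n + 1 - (j:ℕ) : ℕ) : ℤ)) j).det := by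
  set A := PhiMat p φ t (n+1) with hA
  set M := A.submatrix (Fin.last n).succAbove j.succAbove with hM
  have hjn : (j : ℕ) ≤ n := Nat.lt_succ_iff.mp j.isLt
  have hsplit : (j : ℕ) + (n - (j : ℕ)) = n := by omega
  let e : Fin (j : ℕ) ⊕ Fin (n - (j : ℕ)) ≃ Fin n := finSumFinEquiv.trans (finCongr hsplit)
  have hdet : M.det = (M.submatrix e e).det := (Matrix.det_submatrix_equiv_self e M).symm
  -- value facts
  have he1 : ∀ r : Fin (j : ℕ), ((e (Sum.inl r)) : ℕ) = (r : ℕ) := by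
    intro r; simp [e, finSumFinEquiv]
  have he2 : ∀ r : Fin (n - (j : ℕ)), ((e (Sum.inr r)) : ℕ) = (j : ℕ) + (r : ℕ) := by
    intro r; simp [e, finSumFinEquiv]
  have hrow : ∀ c : Fin n, (((Fin.last n).succAbove c : Fin (n+1)) : ℕ) = (c : ℕ) := by
    intro c
    rw [Fin.succAbove_of_castSucc_lt]
    · rfl
    · exact Fin.castSucc_lt_last c
  have hcol : ∀ c : Fin n, ((j.succAbove c : Fin (n+1)) : ℕ)
      = if (c : ℕ) < (j : ℕ) then (c : ℕ) else (c : ℕ) + 1 := by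
    intro c
    by_cases h : (c : ℕ) < (j : ℕ)
    · rw [Fin.succAbove_of_castSucc_lt, if_pos h]; · rfl
      · exact h
    · rw [Fin.succAbove_of_le_castSucc, if_neg h]; · rfl
      · exact Fin.not_lt.mp (by simpa [Fin.lt_def] using h)
  -- block decomposition
  let B : Matrix (Fin (j:ℕ)) (Fin (j:ℕ)) ℝ := PhiMat p φ (t - ((n + 1 - (j:ℕ) : ℕ) : ℤ)) j
  let C : Matrix (Fin (n - (j:ℕ))) (Fin (j:ℕ)) ℝ :=
    fun r s => M.submatrix e e (Sum.inr r) (Sum.inl s)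
  let D : Matrix (Fin (n - (j:ℕ))) (Fin (n - (j:ℕ))) ℝ :=
    fun r s => M.submatrix e e (Sum.inr r) (Sum.inr s)
  have hMval : ∀ (x y : Fin (j:ℕ) ⊕ Fin (n - (j:ℕ))),
      M.submatrix e e x y = A ((Fin.last n).succAbove (e x)) (j.succAbove (e y)) := by
    intro x y; rfl
  have hblocks : M.submatrix e e = Matrix.fromBlocks B 0 C D := by
    ext x y
    cases x with
    | inl r =>
      cases y with
      | inl s =>
        rw [hMval]
        have h1 : (((Fin.last n).succAbove (e (Sum.inl r)) : Fin (n+1)) : ℕ) = (r : ℕ) := by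
          rw [hrow, he1]
        have h2 : ((j.succAbove (e (Sum.inl s)) : Fin (n+1)) : ℕ) = (s : ℕ) := by
          rw [hcol, he1, if_pos s.isLt]
        simp only [Matrix.fromBlocks_apply₁₁, hA, PhiMat, Matrix.of_apply, h1, h2, B]
        split_ifs with hc1 hc2
        · rfl
        · congr 1
          have : ((n + 1 - (j:ℕ) : ℕ) : ℤ) = (n : ℤ) + 1 - (j : ℕ) := by
            push_cast [Nat.cast_sub (by omega : (j:ℕ) ≤ n + 1)]; ring
          rw [this]; push_cast; ring
        · rfl
      | inr s =>
        rw [hMval]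
        have h1 : (((Fin.last n).succAbove (e (Sum.inl r)) : Fin (n+1)) : ℕ) = (r : ℕ) := by
          rw [hrow, he1]
        have h2 : ((j.succAbove (e (Sum.inr s)) : Fin (n+1)) : ℕ) = (j : ℕ) + (s : ℕ) + 1 := by
          rw [hcol, he2, if_neg (by omega)]
        have hr : (r : ℕ) < (j : ℕ) := r.isLt
        simp only [Matrix.fromBlocks_apply₁₂, hA, PhiMat, Matrix.of_apply, h1, h2,
          Matrix.zero_apply]
        rw [if_neg (by omega), if_neg (by omega)]
    | inr r =>
      cases y with
      | inl s => exact (Matrix.fromBlocks_apply₂₁ B 0 C D r s).symm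
      | inr s => exact (Matrix.fromBlocks_apply₂₂ B 0 C D r s).symm
  have hDdiag : ∀ r, D r r = -1 := by
    intro r
    show M.submatrix e e (Sum.inr r) (Sum.inr r) = -1
    rw [hMval]
    have h1 : (((Fin.last n).succAbove (e (Sum.inr r)) : Fin (n+1)) : ℕ) = (j : ℕ) + (r : ℕ) := by
      rw [hrow, he2]
    have h2 : ((j.succAbove (e (Sum.inr r)) : Fin (n+1)) : ℕ) = (j : ℕ) + (r : ℕ) + 1 := by
      rw [hcol, he2, if_neg (by omega)]
    simp only [hA, PhiMat, Matrix.of_apply, h1, h2]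
    simp
  have hDtri : D.BlockTriangular OrderDual.toDual := by
    intro r s hrs
    have hlt : r < s := hrs
    show M.submatrix e e (Sum.inr r) (Sum.inr s) = 0
    rw [hMval]
    have h1 : (((Fin.last n).succAbove (e (Sum.inr r)) : Fin (n+1)) : ℕ) = (j : ℕ) + (r : ℕ) := by
      rw [hrow, he2]
    have h2 : ((j.succAbove (e (Sum.inr s)) : Fin (n+1)) : ℕ) = (j : ℕ) + (s : ℕ) + 1 := by
      rw [hcol, he2, if_neg (by omega)]
    have hrs' : (r : ℕ) < (s : ℕ) := hlt
    simp only [hA, PhiMat, Matrix.of_apply, h1, h2]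
    rw [if_neg (by omega), if_neg (by omega)]
  have hDdet : D.det = (-1 : ℝ) ^ (n - (j : ℕ)) := by
    rw [Matrix.det_of_lowerTriangular D hDtri]
    simp [hDdiag]
  rw [hdet, hblocks, Matrix.det_fromBlocks_zero₁₂, hDdet, mul_comm]

lemma det_phi_rec (p : ℕ) (φ : ℕ → ℤ → ℝ) (t : ℤ) (n : ℕ) :
    (PhiMat p φ t (n+1)).det
      = ∑ m ∈ Finset.Icc 1 (min p (n+1)),
          φ m t * (PhiMat p φ (t - (m : ℤ)) (n+1-m)).det := by
  rw [show (n + 1) = Nat.succ n from rfl, Matrix.det_succ_row _ (Fin.last n)]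
  have hstep : ∀ j : Fin (n+1),
      (-1 : ℝ) ^ ((Fin.last n : ℕ) + (j : ℕ)) * PhiMat p φ t (n+1) (Fin.last n) j
          * ((PhiMat p φ t (n+1)).submatrix (Fin.last n).succAbove j.succAbove).det
      = (if n - (j : ℕ) + 1 ≤ p then φ (n - (j : ℕ) + 1) t else 0)
          * (PhiMat p φ (t - ((n + 1 - (j:ℕ) : ℕ) : ℤ)) (j : ℕ)).det := by
    intro j
    have hjn : (j : ℕ) ≤ n := Nat.lt_succ_iff.mp j.isLt
    rw [minor_det]
    have hsign : (-1 : ℝ) ^ ((Fin.last n : ℕ) + (j : ℕ)) * (-1 : ℝ) ^ (n - (j : ℕ)) = 1 := by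
      rw [Fin.val_last, ← pow_add, show n + (j:ℕ) + (n - (j:ℕ)) = 2 * n by omega, pow_mul]
      norm_num
    have hentry : PhiMat p φ t (n+1) (Fin.last n) j
        = (if n - (j : ℕ) + 1 ≤ p then φ (n - (j : ℕ) + 1) t else 0) := by
      simp only [PhiMat, Fin.val_last]
      rw [if_neg (by omega)]
      by_cases h : n - (j : ℕ) + 1 ≤ p
      · rw [if_pos ⟨hjn, h⟩, if_pos h]
        congr 1
        push_cast
        ring
      · rw [if_neg (by tauto), if_neg h]
    rw [hentry]
    calc (-1 : ℝ) ^ ((Fin.last n : ℕ) + (j : ℕ))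
          * (if n - (j : ℕ) + 1 ≤ p then φ (n - (j : ℕ) + 1) t else 0)
          * ((-1 : ℝ) ^ (n - (j : ℕ)) * (PhiMat p φ (t - ((n + 1 - (j:ℕ) : ℕ) : ℤ)) (j : ℕ)).det)
        = ((-1 : ℝ) ^ ((Fin.last n : ℕ) + (j : ℕ)) * (-1 : ℝ) ^ (n - (j : ℕ)))
          * ((if n - (j : ℕ) + 1 ≤ p then φ (n - (j : ℕ) + 1) t else 0)
             * (PhiMat p φ (t - ((n + 1 - (j:ℕ) : ℕ) : ℤ)) (j : ℕ)).det) := by ring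
      _ = _ := by rw [hsign, one_mul]
  rw [Finset.sum_congr rfl (fun j _ => hstep j)]
  -- reindex : m = n + 1 - j
  rw [show (Finset.univ : Finset (Fin (n+1))) = Finset.univ from rfl]
  have hre : ∑ j : Fin (n+1),
      (if n - (j : ℕ) + 1 ≤ p then φ (n - (j : ℕ) + 1) t else 0)
        * (PhiMat p φ (t - ((n + 1 - (j:ℕ) : ℕ) : ℤ)) (j : ℕ)).det
      = ∑ m ∈ Finset.Icc 1 (n+1),
          (if m ≤ p then φ m t else 0) * (PhiMat p φ (t - (m : ℤ)) (n+1-m)).det := by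
    apply Finset.sum_nbij' (i := fun j : Fin (n+1) => n + 1 - (j : ℕ))
      (j := fun m => (⟨n - (m - 1), by omega⟩ : Fin (n+1)))
    · intro a _; simp only [Finset.mem_Icc]; omega
    · intro a _; exact Finset.mem_univ _
    · intro a _; ext; have := a.isLt; simp; omega
    · intro a ha; simp only [Finset.mem_Icc] at ha; simp; omega
    · intro j _
      have hjn : (j : ℕ) ≤ n := Nat.lt_succ_iff.mp j.isLt
      have h1 : n - (j : ℕ) + 1 = n + 1 - (j : ℕ) := by omega
      have h2 : n + 1 - (n + 1 - (j : ℕ)) = (j : ℕ) := by omega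
      rw [h1, h2]
  rw [hre]
  rw [← Finset.sum_subset (Finset.Icc_subset_Icc_right (min_le_right p (n+1)))]
  · apply Finset.sum_congr rfl
    intro m hm
    simp only [Finset.mem_Icc] at hm
    rw [if_pos (le_trans hm.2 (min_le_left _ _))]
  · intro m hm hnm
    simp only [Finset.mem_Icc] at hm hnm
    rw [if_neg (by omega)]
    ring

/-- The Hessenbergian (Green function) `ξ_{t,k} = det Φ_{t,k}`, with the conventions
`ξ_{t,0} = 1` (empty determinant) and `ξ_{t,k} = 0` for `k < 0`. -/
noncomputable def xi (p : ℕ) (φ : ℕ → ℤ → ℝ) (t : ℤ) (k : ℤ) : ℝ :=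
  if 0 ≤ k then (PhiMat p φ t k.toNat).det else 0

/-- Backward recursion for the Hessenbergian:
`ξ_{t,k} = Σ_{m=1}^{min(p,k)} φ_m(t) ξ_{t−m, k−m}`. -/
theorem xi_backward_recursion
    (p : ℕ) (hp : 1 ≤ p) (φ : ℕ → ℤ → ℝ) (t : ℤ) (k : ℕ) (hk : 1 ≤ k) :
    xi p φ t k
      = ∑ m ∈ Finset.Icc 1 (min p k), φ m t * xi p φ (t - m) ((k : ℤ) - m) := by
  obtain ⟨n, rfl⟩ : ∃ n, k = n + 1 := ⟨k - 1, by omega⟩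
  have hL : xi p φ t (n+1 : ℕ) = (PhiMat p φ t (n+1)).det := by
    rw [xi, if_pos (by positivity)]
    rw [Int.toNat_natCast]
  rw [hL, det_phi_rec]
  apply Finset.sum_congr rfl
  intro m hm
  simp only [Finset.mem_Icc] at hm
  have hmk : m ≤ n + 1 := le_trans hm.2 (min_le_right _ _)
  congr 1
  rw [xi, if_pos (by push_cast; omega)]
  rw [show (((n+1 : ℕ) : ℤ) - (m : ℤ)) = ((n + 1 - m : ℕ) : ℤ) by push_cast; omega,
    Int.toNat_natCast]
end

section
/- Let y be a process such that each y_τ is 𝓕_τ-measurable and integrable, and y_τ = φ_0(τ) + Σ_{m=1}^p φ_m(τ) y_{τ−m} + ε_τ almost surely for every τ ∈ ℤ. Then for every t ∈ ℤ and every integer N ≥ 1, the N-step-ahead optimal linear predictor satisfies, almost surely, E[y_t | 𝓕_{t−N}] = Σ_{r=0}^{N−1} ξ_{t,r} φ_0(t−r) + ξ_{t,N} y_{t−N} + Σ_{m=1}^{p−1} Σ_{i=1}^{p−m} φ_{m+i}(t−N+i) ξ_{t,N−i} y_{t−N−m}. -/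
open Finset

open MeasureTheory Filter

noncomputable def MAux (p : ℕ) (φ : ℕ → ℤ → ℝ) (t : ℤ) (k s : ℕ) :
    Matrix (Fin k) (Fin k) ℝ :=
  fun i j =>
    if (i : ℕ) + 1 = (j : ℕ) then -1
    else if (j : ℕ) = 0 then
      (if (i : ℕ) + s ≤ p then φ ((i : ℕ) + s) (t - (k : ℤ) + (i : ℕ) + 1) else 0)
    else if (j : ℕ) ≤ (i : ℕ) ∧ (i : ℕ) - (j : ℕ) + 1 ≤ p then
      φ ((i : ℕ) - (j : ℕ) + 1) (t - (k : ℤ) + (i : ℕ) + 1)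
    else 0

theorem MAux_one (p : ℕ) (φ : ℕ → ℤ → ℝ) (t : ℤ) (k : ℕ) :
    MAux p φ t k 1 = PhiMat p φ t k := by
  funext i j
  simp only [MAux, PhiMat]
  split_ifs <;>
    first
      | rfl
      | exact ‹False›.elim
      | omega
      | (congr 1 <;> omega)

theorem det_MAux_step (p : ℕ) (φ : ℕ → ℤ → ℝ) (t : ℤ) (k s : ℕ) :
    (MAux p φ t (k + 2) s).det
      = (if s ≤ p then φ s (t - (k : ℤ) - 1) else 0) * (PhiMat p φ t (k + 1)).det
        + (MAux p φ t (k + 1) (s + 1)).det := by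
  have hsub0 : (MAux p φ t (k+2) s).submatrix Fin.succ (Fin.succAbove 0)
      = PhiMat p φ t (k+1) := by
    funext a b
    simp only [Matrix.submatrix_apply, Fin.succAbove_zero, MAux, PhiMat, Fin.val_succ]
    split_ifs <;>
      first
        | rfl
        | exact ‹False›.elim
        | omega
        | (congr 1 <;> omega)
  have hcoord : ∀ b : Fin (k+1), (((1 : Fin (k+2)).succAbove b) : ℕ)
      = if (b : ℕ) = 0 then 0 else (b : ℕ) + 1 := by
    intro b
    rcases Nat.eq_zero_or_pos (b : ℕ) with hb | hb
    · rw [Fin.succAbove_of_castSucc_lt]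
      · simp [Fin.coe_castSucc, hb]
      · simp [Fin.lt_def, Fin.coe_castSucc, hb]
    · rw [Fin.succAbove_of_le_castSucc]
      · rw [Fin.val_succ, if_neg (by omega)]
      · simp [Fin.le_def, Fin.coe_castSucc]; omega
  have hsub1 : (MAux p φ t (k+2) s).submatrix Fin.succ (Fin.succAbove 1)
      = MAux p φ t (k+1) (s+1) := by
    funext a b
    have hb := hcoord b
    simp only [Matrix.submatrix_apply, MAux, Fin.val_succ, hb]
    by_cases h0 : (b : ℕ) = 0 <;> simp only [h0, if_pos, if_neg, if_true, if_false] <;>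
      split_ifs <;>
      first
        | rfl
        | exact ‹False›.elim
        | omega
        | (congr 1 <;> omega)
  rw [Matrix.det_succ_row_zero, Fin.sum_univ_succ, Fin.sum_univ_succ]
  have h00 : (MAux p φ t (k+2) s) 0 0 = if s ≤ p then φ s (t - (k : ℤ) - 1) else 0 := by
    simp only [MAux, Fin.val_zero]
    norm_num
    split_ifs <;> first | rfl | exact ‹False›.elim | omega | (congr 1 <;> push_cast <;> omega)
  have h01 : (MAux p φ t (k+2) s) 0 ((0 : Fin (k+1)).succ) = -1 := by
    simp [MAux]
  have hrest : ∀ j : Fin k, (MAux p φ t (k+2) s) 0 j.succ.succ = 0 := by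
    intro j
    simp only [MAux, Fin.val_zero, Fin.val_succ]
    split_ifs <;> first | rfl | exact ‹False›.elim | omega
  rw [h00, h01]
  have : ∑ i : Fin k,
      (-1 : ℝ) ^ ((i.succ.succ : Fin (k+2)) : ℕ) * (MAux p φ t (k+2) s) 0 i.succ.succ *
        ((MAux p φ t (k+2) s).submatrix Fin.succ (i.succ.succ).succAbove).det = 0 := by
    apply Finset.sum_eq_zero
    intro j _
    rw [hrest j]
    ring
  rw [this, hsub0]
  have h1' : ((0 : Fin (k+1)).succ) = (1 : Fin (k+2)) := rfl
  rw [h1', hsub1]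
  simp
  try ring

theorem sum_Icc_one' (K : ℕ) (f : ℕ → ℝ) : ∑ m ∈ Icc 1 K, f m = ∑ j ∈ range K, f (1+j) := by
  induction K with
  | zero => simp
  | succ K ih =>
    rw [Finset.sum_range_succ, ← ih, ← Finset.insert_Icc_right_eq_Icc_add_one (by omega),
      Finset.sum_insert (by simp)]
    rw [add_comm 1 K]; ring

theorem det_MAux (p : ℕ) (φ : ℕ → ℤ → ℝ) (t : ℤ) :
    ∀ (k s : ℕ), (MAux p φ t (k+1) s).det
      = ∑ j ∈ range (k+1),
          (if s + j ≤ p then φ (s+j) (t - ((k:ℤ)+1) + 1 + j) else 0)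
            * (PhiMat p φ t (k - j)).det := by
  intro k
  induction k with
  | zero =>
    intro s
    rw [Matrix.det_fin_one, Finset.sum_range_one]
    have h0 : (PhiMat p φ t 0).det = 1 := Matrix.det_isEmpty
    rw [h0, mul_one]
    simp only [MAux, Fin.val_zero]
    norm_num
  | succ k ih =>
    intro s
    rw [det_MAux_step, ih (s+1)]
    conv_rhs => rw [Finset.sum_range_succ']
    rw [add_comm]
    congr 1
    · apply Finset.sum_congr rfl
      intro j _
      have e1 : s + (j+1) = s + 1 + j := by omega
      have e2 : k + 1 - (j+1) = k - j := by omega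
      have e3 : t - (((k+1:ℕ):ℤ)+1) + 1 + ((j+1:ℕ):ℤ) = t - ((k:ℤ)+1) + 1 + (j:ℤ) := by
        push_cast; ring
      rw [e1, e2, e3]
    · have e2 : k + 1 - 0 = k + 1 := rfl
      have e3 : t - (((k+1:ℕ):ℤ)+1) + 1 + ((0:ℕ):ℤ) = t - (k:ℤ) - 1 := by push_cast; ring
      rw [e2, e3]
      norm_num

theorem xi_zero (p : ℕ) (φ : ℕ → ℤ → ℝ) (t : ℤ) : xi p φ t 0 = 1 := by
  simp [xi, Matrix.det_isEmpty]

theorem xi_neg (p : ℕ) (φ : ℕ → ℤ → ℝ) (t : ℤ) {k : ℤ} (h : k < 0) : xi p φ t k = 0 := by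
  simp [xi, not_le.2 h]

theorem xi_natCast (p : ℕ) (φ : ℕ → ℤ → ℝ) (t : ℤ) (k : ℕ) :
    xi p φ t (k : ℤ) = (PhiMat p φ t k).det := by
  simp [xi]

theorem xi_rec (p : ℕ) (φ : ℕ → ℤ → ℝ) (t : ℤ) (n : ℕ) :
    xi p φ t ((n:ℤ)+1)
      = ∑ m ∈ Icc 1 p, φ m (t - ((n:ℤ)+1) + m) * xi p φ t ((n:ℤ)+1 - m) := by
  set f : ℕ → ℝ := fun j =>
    (if 1 + j ≤ p then φ (1+j) (t - ((n:ℤ)+1) + 1 + j) else 0) * xi p φ t ((n:ℤ) - j) with hf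
  have h1 : xi p φ t ((n:ℤ)+1) = ∑ j ∈ range (n+1), f j := by
    rw [show ((n:ℤ)+1) = ((n+1 : ℕ) : ℤ) by push_cast; ring, xi_natCast,
      ← MAux_one p φ t (n+1), det_MAux]
    apply Finset.sum_congr rfl
    intro j hj
    rw [Finset.mem_range] at hj
    simp only [hf]
    congr 1
    rw [show ((n:ℤ) - (j:ℤ)) = ((n - j : ℕ) : ℤ) by omega, xi_natCast]
  have h2 : ∑ j ∈ range (n+1), f j = ∑ j ∈ range (n+1+p), f j := by
    apply Finset.sum_subset (Finset.range_subset_range.2 (by omega))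
    intro j _ hj
    rw [Finset.mem_range, not_lt] at hj
    simp only [hf]
    rw [xi_neg p φ t (by push_cast; omega), mul_zero]
  have h3 : ∑ j ∈ range p, f j = ∑ j ∈ range (n+1+p), f j := by
    apply Finset.sum_subset (Finset.range_subset_range.2 (by omega))
    intro j _ hj
    rw [Finset.mem_range, not_lt] at hj
    simp only [hf]
    rw [if_neg (by omega), zero_mul]
  rw [h1, h2, ← h3, sum_Icc_one' p]
  apply Finset.sum_congr rfl
  intro j hj
  rw [Finset.mem_range] at hj
  simp only [hf]
  have e1 : (t - ((n:ℤ)+1) + ((1+j:ℕ):ℤ)) = t - ((n:ℤ)+1) + 1 + (j:ℤ) := by push_cast; ring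
  have e2 : ((n:ℤ)+1 - ((1+j:ℕ):ℤ)) = (n:ℤ) - (j:ℤ) := by push_cast; ring
  rw [e1, e2, if_pos (by omega)]

theorem step_alg (p : ℕ) (hp : 1 ≤ p) (φ : ℕ → ℤ → ℝ) (t : ℤ) (ξ : ℤ → ℝ)
    (hneg : ∀ z : ℤ, z < 0 → ξ z = 0) (n : ℕ)
    (hrec : ξ ((n:ℤ)+1) = ∑ m ∈ Icc 1 p, φ m (t - ((n:ℤ)+1) + m) * ξ ((n:ℤ)+1 - m))
    (v : ℤ → ℝ) :
    ξ (n:ℤ) * (φ 0 (t - (n:ℤ)) + ∑ m ∈ Icc 1 p, φ m (t - (n:ℤ)) * v (t - (n:ℤ) - m))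
      + ∑ m ∈ Icc 1 (p-1), ∑ i ∈ Icc 1 (p-m),
          φ (m+i) (t - (n:ℤ) + i) * ξ ((n:ℤ) - i) * v (t - (n:ℤ) - m)
    = ξ (n:ℤ) * φ 0 (t - (n:ℤ)) + ξ ((n:ℤ)+1) * v (t - ((n:ℤ)+1))
      + ∑ m ∈ Icc 1 (p-1), ∑ i ∈ Icc 1 (p-m),
          φ (m+i) (t - ((n:ℤ)+1) + i) * ξ ((n:ℤ)+1 - i) * v (t - ((n:ℤ)+1) - m) := by
  obtain ⟨q, rfl⟩ : ∃ q, p = q + 1 := ⟨p - 1, by omega⟩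
  simp only [Nat.add_sub_cancel]
  have h1 : ∑ m ∈ Icc 1 (q+1), φ m (t - (n:ℤ)) * v (t - (n:ℤ) - m)
      = φ 1 (t - (n:ℤ)) * v (t - (n:ℤ) - 1)
        + ∑ j ∈ range q, φ (2+j) (t - (n:ℤ)) * v (t - (n:ℤ) - 2 - j) := by
    rw [sum_Icc_one', Finset.sum_range_succ']
    conv_lhs => rw [add_comm]
    congr 1
    all_goals
      first
        | (refine Finset.sum_congr rfl fun j _ => by push_cast; ring_nf)
        | (push_cast; ring_nf)
  have h2 : ∑ m ∈ Icc 1 q, ∑ i ∈ Icc 1 (q+1-m),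
        φ (m+i) (t - (n:ℤ) + i) * ξ ((n:ℤ) - i) * v (t - (n:ℤ) - m)
      = ∑ j ∈ range q, (∑ a ∈ range (q - j),
          φ (2+j+a) (t - (n:ℤ) + 1 + a) * ξ ((n:ℤ) - 1 - a)) * v (t - (n:ℤ) - 1 - j) := by
    rw [sum_Icc_one']
    refine Finset.sum_congr rfl fun j hj => ?_
    rw [Finset.mem_range] at hj
    rw [show q + 1 - (1+j) = q - j by omega, sum_Icc_one', Finset.sum_mul]
    refine Finset.sum_congr rfl fun a _ => by push_cast; ring_nf
  have h3 : ξ ((n:ℤ)+1)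
      = φ 1 (t - (n:ℤ)) * ξ (n:ℤ)
        + ∑ a ∈ range q, φ (2+a) (t - (n:ℤ) + 1 + a) * ξ ((n:ℤ) - 1 - a) := by
    rw [hrec, sum_Icc_one', Finset.sum_range_succ']
    conv_lhs => rw [add_comm]
    congr 1
    all_goals
      first
        | (refine Finset.sum_congr rfl fun a _ => by push_cast; ring_nf)
        | (push_cast; ring_nf)
  have h4 : ∑ m ∈ Icc 1 q, ∑ i ∈ Icc 1 (q+1-m),
        φ (m+i) (t - ((n:ℤ)+1) + i) * ξ ((n:ℤ)+1 - i) * v (t - ((n:ℤ)+1) - m)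
      = ξ (n:ℤ) * (∑ j ∈ range q, φ (2+j) (t - (n:ℤ)) * v (t - (n:ℤ) - 2 - j))
        + ∑ j ∈ range q, (∑ a ∈ range (q - (j+1)),
            φ (2+(j+1)+a) (t - (n:ℤ) + 1 + a) * ξ ((n:ℤ) - 1 - a)) * v (t - (n:ℤ) - 2 - j) := by
    rw [Finset.mul_sum, ← Finset.sum_add_distrib, sum_Icc_one']
    refine Finset.sum_congr rfl fun j hj => ?_
    rw [Finset.mem_range] at hj
    rw [show q + 1 - (1+j) = (q - (j+1)) + 1 by omega, sum_Icc_one', Finset.sum_range_succ']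
    conv_lhs => rw [add_comm]
    rw [Finset.sum_mul]
    congr 1
    · push_cast
      ring_nf
    · refine Finset.sum_congr rfl fun a _ => by push_cast; ring_nf
  have h5 : ∑ j ∈ range q, (∑ a ∈ range (q - j),
        φ (2+j+a) (t - (n:ℤ) + 1 + a) * ξ ((n:ℤ) - 1 - a)) * v (t - (n:ℤ) - 1 - j)
      = (∑ a ∈ range q, φ (2+a) (t - (n:ℤ) + 1 + a) * ξ ((n:ℤ) - 1 - a)) * v (t - (n:ℤ) - 1)
        + ∑ j ∈ range q, (∑ a ∈ range (q - (j+1)),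
            φ (2+(j+1)+a) (t - (n:ℤ) + 1 + a) * ξ ((n:ℤ) - 1 - a)) * v (t - (n:ℤ) - 2 - j) := by
    rcases Nat.eq_zero_or_pos q with hq | hq
    · subst hq
      simp
    · obtain ⟨q', rfl⟩ : ∃ q', q = q' + 1 := ⟨q - 1, by omega⟩
      rw [Finset.sum_range_succ']
      conv_rhs =>
        arg 2
        rw [Finset.sum_range_succ, show q' + 1 - (q' + 1) = 0 by omega,
          Finset.range_zero, Finset.sum_empty, zero_mul, add_zero]
      conv_lhs => rw [add_comm]
      congr 1
      · refine congrArg₂ (· * ·) ?_ (by push_cast; ring_nf)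
        refine Finset.sum_congr (by rw [Nat.sub_zero]) fun a _ => by push_cast; ring_nf
      · refine Finset.sum_congr rfl fun j _ => ?_
        refine congrArg₂ (· * ·) rfl (by push_cast; ring_nf)
  rw [h1, h2, h4, h5, h3]
  generalize (∑ j ∈ range q, φ (2+j) (t - (n:ℤ)) * v (t - (n:ℤ) - 2 - (j:ℤ))) = S1
  generalize (∑ a ∈ range q, φ (2+a) (t - (n:ℤ) + 1 + (a:ℤ)) * ξ ((n:ℤ) - 1 - (a:ℤ))) = G0
  generalize (∑ j ∈ range q, (∑ a ∈ range (q - (j+1)),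
      φ (2+(j+1)+a) (t - (n:ℤ) + 1 + (a:ℤ)) * ξ ((n:ℤ) - 1 - (a:ℤ))) * v (t - (n:ℤ) - 2 - (j:ℤ))) = S3
  ring

theorem condexp_shape {Ω : Type*} {m0 : MeasurableSpace Ω} {μ : Measure Ω}
    [IsProbabilityMeasure μ] {m : MeasurableSpace Ω} (hm : m ≤ m0) {B e : Ω → ℝ}
    (hB : StronglyMeasurable[m] B) (hBi : Integrable B μ) (hei : Integrable e μ)
    (he : μ[e|m] =ᵐ[μ] 0) (a : ℝ) :
    μ[fun ω => B ω + a * e ω|m] =ᵐ[μ] B := by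
  have h1 : (fun ω => B ω + a * e ω) = B + a • e := by
    funext ω; simp [smul_eq_mul]
  rw [h1]
  calc μ[B + a • e|m] =ᵐ[μ] μ[B|m] + μ[a • e|m] := condExp_add hBi (hei.smul a) m
    _ =ᵐ[μ] B + a • μ[e|m] := by
        rw [condExp_of_stronglyMeasurable hm hB hBi]
        exact Filter.EventuallyEq.add (Filter.EventuallyEq.refl _ _) (condExp_smul (μ := μ) (m := m) a e)
    _ =ᵐ[μ] B := by
        filter_upwards [he] with ω hω
        simp only [Pi.add_apply, Pi.smul_apply, Pi.zero_apply] at hω ⊢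
        rw [hω]
        simp

/-- The `N`-step-ahead optimal linear predictor of a PAR(`p`) process. -/
theorem par_optimal_predictor
    (p : ℕ) (hp : 1 ≤ p) (φ : ℕ → ℤ → ℝ)
    {Ω : Type*} {m0 : MeasurableSpace Ω} {μ : Measure Ω} [IsProbabilityMeasure μ]
    (𝓕 : Filtration ℤ m0)
    (ε : ℤ → Ω → ℝ)
    (hεmeas : ∀ τ : ℤ, StronglyMeasurable[𝓕 τ] (ε τ))
    (hεL2 : ∀ τ : ℤ, MemLp (ε τ) 2 μ)
    (hεmart : ∀ τ : ℤ, μ[ε τ | 𝓕 (τ - 1)] =ᵐ[μ] 0)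
    (y : ℤ → Ω → ℝ)
    (hymeas : ∀ τ : ℤ, StronglyMeasurable[𝓕 τ] (y τ))
    (hyint : ∀ τ : ℤ, Integrable (y τ) μ)
    (hy : ∀ τ : ℤ, y τ =ᵐ[μ] fun ω =>
      φ 0 τ + (∑ m ∈ Finset.Icc 1 p, φ m τ * y (τ - m) ω) + ε τ ω)
    (t : ℤ) (N : ℕ) (hN : 1 ≤ N) :
    μ[y t | 𝓕 (t - N)] =ᵐ[μ] fun ω =>
      (∑ r ∈ Finset.range N, xi p φ t r * φ 0 (t - r))
      + xi p φ t N * y (t - N) ω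
      + ∑ m ∈ Finset.Icc 1 (p - 1), ∑ i ∈ Finset.Icc 1 (p - m),
          φ (m + i) (t - N + i) * xi p φ t ((N : ℤ) - i) * y (t - N - m) ω := by
  have hneg : ∀ z : ℤ, z < 0 → xi p φ t z = 0 := fun z hz => xi_neg p φ t hz
  suffices H : ∀ n : ℕ, μ[y t | 𝓕 (t - n)] =ᵐ[μ] fun ω =>
      (∑ r ∈ Finset.range n, xi p φ t r * φ 0 (t - r))
      + xi p φ t n * y (t - n) ω
      + ∑ m ∈ Finset.Icc 1 (p - 1), ∑ i ∈ Finset.Icc 1 (p - m),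
          φ (m + i) (t - n + i) * xi p φ t ((n : ℤ) - i) * y (t - n - m) ω by
    exact H N
  intro n
  induction n with
  | zero =>
    simp only [Nat.cast_zero, sub_zero, zero_sub, Finset.range_zero, Finset.sum_empty,
      zero_add]
    rw [condExp_of_stronglyMeasurable (𝓕.le t) (hymeas t) (hyint t)]
    refine Filter.EventuallyEq.of_eq (funext fun ω => ?_)
    rw [xi_zero, one_mul, left_eq_add]
    exact Finset.sum_eq_zero fun m hm => Finset.sum_eq_zero fun i hi => by
      rw [Finset.mem_Icc] at hi
      rw [xi_neg p φ t (show -(i:ℤ) < 0 by omega), mul_zero, zero_mul]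
  | succ n ih =>
    have hcast : ((n+1 : ℕ) : ℤ) = (n:ℤ)+1 := by push_cast; ring
    rw [hcast]
    have hle : 𝓕 (t - ((n:ℤ)+1)) ≤ 𝓕 (t - (n:ℤ)) := 𝓕.mono (by omega)
    have hεint : Integrable (ε (t - (n:ℤ))) μ := (hεL2 _).integrable (by norm_num)
    have hε0 : μ[ε (t - (n:ℤ)) | 𝓕 (t - ((n:ℤ)+1))] =ᵐ[μ] 0 := by
      have h := hεmart (t - (n:ℤ))
      have e : t - (n:ℤ) - 1 = t - ((n:ℤ)+1) := by ring
      rwa [e] at h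
    set B : Ω → ℝ := fun ω =>
      (∑ r ∈ Finset.range n, xi p φ t r * φ 0 (t - r))
      + xi p φ t n * (φ 0 (t - n) + ∑ m ∈ Finset.Icc 1 p, φ m (t - n) * y (t - n - m) ω)
      + ∑ m ∈ Finset.Icc 1 (p - 1), ∑ i ∈ Finset.Icc 1 (p - m),
          φ (m + i) (t - n + i) * xi p φ t ((n : ℤ) - i) * y (t - n - m) ω with hBdef
    have hBmeas : StronglyMeasurable[𝓕 (t - ((n:ℤ)+1))] B := by
      refine StronglyMeasurable.add (StronglyMeasurable.add stronglyMeasurable_const ?_) ?_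
      · refine StronglyMeasurable.const_mul ?_ _
        refine StronglyMeasurable.add stronglyMeasurable_const ?_
        refine stronglyMeasurable_fun_sum _ fun m hm => ?_
        rw [Finset.mem_Icc] at hm
        exact ((hymeas (t - n - m)).mono (𝓕.mono (by omega))).const_mul _
      · refine stronglyMeasurable_fun_sum _ fun m hm => ?_
        rw [Finset.mem_Icc] at hm
        refine stronglyMeasurable_fun_sum _ fun i hi => ?_
        exact ((hymeas (t - n - m)).mono (𝓕.mono (by omega))).const_mul _
    have hBint : Integrable B μ := by
      refine Integrable.add (Integrable.add (integrable_const _) ?_) ?_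
      · refine Integrable.const_mul ?_ _
        exact (integrable_const _).add
          (integrable_finset_sum _ fun m hm => (hyint _).const_mul _)
      · exact integrable_finset_sum _ fun m hm =>
          integrable_finset_sum _ fun i hi => (hyint _).const_mul _
    have hpred : (fun ω =>
        (∑ r ∈ Finset.range n, xi p φ t r * φ 0 (t - r))
        + xi p φ t n * y (t - n) ω
        + ∑ m ∈ Finset.Icc 1 (p - 1), ∑ i ∈ Finset.Icc 1 (p - m),
            φ (m + i) (t - n + i) * xi p φ t ((n : ℤ) - i) * y (t - n - m) ω)
        =ᵐ[μ] fun ω => B ω + xi p φ t n * ε (t - n) ω := by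
      filter_upwards [hy (t - (n:ℤ))] with ω hω
      rw [hBdef]
      simp only []
      rw [hω]
      ring
    have step1 := (condExp_condExp_of_le (μ := μ) (f := y t) hle (𝓕.le (t - (n:ℤ)))).symm
    have step2 := condExp_congr_ae (m := 𝓕 (t - ((n:ℤ)+1))) ih
    have step3 := condExp_congr_ae (m := 𝓕 (t - ((n:ℤ)+1))) hpred
    have step4 := condexp_shape (𝓕.le _) hBmeas hBint hεint hε0 (xi p φ t n)
    have step5 : B =ᵐ[μ] fun ω =>
        (∑ r ∈ Finset.range (n+1), xi p φ t r * φ 0 (t - r))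
        + xi p φ t ((n:ℤ)+1) * y (t - ((n:ℤ)+1)) ω
        + ∑ m ∈ Finset.Icc 1 (p - 1), ∑ i ∈ Finset.Icc 1 (p - m),
            φ (m + i) (t - ((n:ℤ)+1) + i) * xi p φ t ((n:ℤ)+1 - i)
              * y (t - ((n:ℤ)+1) - m) ω := by
      refine Filter.EventuallyEq.of_eq (funext fun ω => ?_)
      rw [hBdef]
      simp only []
      rw [Finset.sum_range_succ]
      linear_combination
        (step_alg p hp φ t (xi p φ t) hneg n (xi_rec p φ t n) (fun z => y z ω))
    exact ((((step1.trans step2).trans step3).trans step4).trans step5)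
end
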